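/- The zero-divisors cup-length of the n-sphere is 1 if n is odd and 2 if n is even, with rational coefficients. That is, the maximal number of elements of ker(∪ : H^*(S^n; Q) ⊗ H^*(S^n; Q) → H^*(S^n; Q)) with nonzero product is 1 for n odd and 2 for n even. -/

import Mathlib

/-- The rational zero-divisors cup-length of `S^n` is `1` if `n` is odd and `2` if `n`
is even. Here `T = H^*(S^n × S^n; ℚ)` with basis `1, a, b, a*b` where `a = x⊗1`,
`b = 1⊗x` satisfy `a² = b² = 0` and graded commutativity `ab = (−1)^{n²} ba`;
`μ : T → S = H^*(S^n; ℚ)` is the cup-product map (pullback along the diagonal), whose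
kernel (the ideal of zero-divisors) is spanned by `a − b` and `a*b`. -/
theorem zcl_sphere
    (n : ℕ) (hn : 1 ≤ n)
    (T S : Type) [Ring T] [Ring S] [Algebra ℚ T] [Algebra ℚ S]
    (a b : T)                                        -- `x⊗1`, `1⊗x`
    (ha : a * a = 0) (hb : b * b = 0)
    (hcomm : a * b = ((-1 : ℤ) ^ (n * n)) • (b * a)) -- graded commutativity
    (hind : LinearIndependent ℚ ![1, a, b, a * b])
    (hspan : Submodule.span ℚ ({1, a, b, a * b} : Set T) = ⊤)
    (μ : T →ₐ[ℚ] S)                                  -- the cup-product map `Δ^*`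
    (hker : ∀ u : T, μ u = 0 ↔ u ∈ Submodule.span ℚ ({a - b, a * b} : Set T)) :
    (Odd n → (∃ u : T, μ u = 0 ∧ u ≠ 0) ∧
      (∀ u v : T, μ u = 0 → μ v = 0 → u * v = 0)) ∧
    (Even n → (∃ u v : T, μ u = 0 ∧ μ v = 0 ∧ u * v ≠ 0) ∧
      (∀ u v w : T, μ u = 0 → μ v = 0 → μ w = 0 → u * v * w = 0)) := by
  have hindF := Fintype.linearIndependent_iff.mp hind
  -- nonvanishing facts
  have hq_ne : a * b ≠ 0 := by
    intro h
    have := hindF ![0, 0, 0, 1] (by simp [Fin.sum_univ_four, h]) 3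
    exact one_ne_zero this
  have hp_ne : a - b ≠ 0 := by
    intro h
    have := hindF ![0, 1, -1, 0] (by simp [Fin.sum_univ_four, sub_eq_zero.mp h]) 1
    norm_num at this
  have h2q_ne : a * b + a * b ≠ 0 := by
    intro h
    have := hindF ![0, 0, 0, 2] (by simp [Fin.sum_univ_four, two_smul, h]) 3
    exact two_ne_zero this
  -- products among p = a - b and q = a * b
  have hba : b * a = ((-1 : ℤ) ^ (n * n)) • (a * b) := by
    rw [hcomm, smul_smul, ← pow_add, ← two_mul]
    simp [pow_mul]
  have hbab : b * (a * b) = 0 := by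
    rw [hcomm, mul_smul_comm, ← mul_assoc, hb, zero_mul, smul_zero]
  have haba : (a * b) * a = 0 := by
    rw [hcomm, smul_mul_assoc, mul_assoc, ha, mul_zero, smul_zero]
  have hpq : (a - b) * (a * b) = 0 := by
    rw [sub_mul, ← mul_assoc, ha, zero_mul, hbab, sub_zero]
  have hqp : (a * b) * (a - b) = 0 := by
    rw [mul_sub, haba, mul_assoc, hb, mul_zero, sub_zero]
  have hqq : (a * b) * (a * b) = 0 := by
    rw [mul_assoc, hbab, mul_zero]
  -- membership facts
  have hμp : μ (a - b) = 0 := (hker _).mpr (Submodule.subset_span (by left; rfl))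
  -- the general expansion
  have hmul : ∀ c d e f : ℚ, (c • (a - b) + d • (a * b)) * (e • (a - b) + f • (a * b))
      = (c * e) • ((a - b) * (a - b)) := by
    intro c d e f
    simp only [add_mul, mul_add, smul_mul_assoc, mul_smul_comm, hpq, hqp, hqq,
      smul_zero, add_zero, smul_smul, mul_comm e c]
  have hppsub : (a - b) * (a - b) = a * a - a * b - (b * a - b * b) := by
    rw [sub_mul, mul_sub, mul_sub]
  constructor
  · -- odd case
    intro hodd
    have hsign : ((-1 : ℤ) ^ (n * n)) = -1 := Odd.neg_one_pow (hodd.mul hodd)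
    have hba' : b * a = -(a * b) := by rw [hba, hsign, neg_one_zsmul]
    have hpp : (a - b) * (a - b) = 0 := by
      rw [hppsub, ha, hb, hba', sub_zero, zero_sub]
      simp
    refine ⟨⟨a - b, hμp, hp_ne⟩, ?_⟩
    intro u v hu hv
    obtain ⟨c, d, hcd⟩ := Submodule.mem_span_pair.mp ((hker u).mp hu)
    obtain ⟨e, f, hef⟩ := Submodule.mem_span_pair.mp ((hker v).mp hv)
    rw [← hcd, ← hef, hmul, hpp, smul_zero]
  · -- even case
    intro heven
    have hsign : ((-1 : ℤ) ^ (n * n)) = 1 := Even.neg_one_pow (heven.mul_right n)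
    have hba' : b * a = a * b := by rw [hba, hsign, one_zsmul]
    have hpp : (a - b) * (a - b) = -(a * b + a * b) := by
      rw [hppsub, ha, hb, hba', sub_zero, zero_sub]
      abel
    constructor
    · refine ⟨a - b, a - b, hμp, hμp, ?_⟩
      rw [hpp]
      intro h
      exact h2q_ne (neg_eq_zero.mp h)
    · intro u v w hu hv hw
      have hqw : (a * b) * w = 0 := by
        obtain ⟨g, h, hgh⟩ := Submodule.mem_span_pair.mp ((hker w).mp hw)
        rw [← hgh, mul_add, mul_smul_comm, mul_smul_comm, hqp, hqq, smul_zero,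
          smul_zero, add_zero]
      obtain ⟨c, d, hcd⟩ := Submodule.mem_span_pair.mp ((hker u).mp hu)
      obtain ⟨e, f, hef⟩ := Submodule.mem_span_pair.mp ((hker v).mp hv)
      have huv : u * v = (-(c * e) - (c * e)) • (a * b) := by
        rw [← hcd, ← hef, hmul, hpp]
        module
      rw [huv, smul_mul_assoc, hqw, smul_zero]
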